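/- Let A and B be positive definite complex n×n matrices. The function t ↦ G_t(A,B) from ℝ to the space of complex n×n matrices has derivative at t = 0 equal to −D_op(A‖B); that is, HasDerivAt (fun t => G_t(A,B)) (−D_op(A‖B)) 0. -/

import Mathlib

open Matrix Kronecker
open scoped ComplexOrder

noncomputable section

/-- Apply a real function to a complex matrix via the spectral decomposition
(meaningful for Hermitian matrices; defined as `0` otherwise). -/
def matFun {n : Type*} [Fintype n] [DecidableEq n]
    (f : ℝ → ℝ) (A : Matrix n n ℂ) : Matrix n n ℂ :=
  if hA : A.IsHermitian then
    (hA.eigenvectorUnitary : Matrix n n ℂ) *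
      Matrix.diagonal (fun i => (f (hA.eigenvalues i) : ℂ)) *
      (hA.eigenvectorUnitary : Matrix n n ℂ)ᴴ
  else 0

/-- Real power of a matrix (via the spectral decomposition). -/
def mpow {n : Type*} [Fintype n] [DecidableEq n] (A : Matrix n n ℂ) (t : ℝ) :
    Matrix n n ℂ :=
  matFun (fun x => x ^ t) A

/-- Logarithm of a matrix (via the spectral decomposition). -/
def mlog {n : Type*} [Fintype n] [DecidableEq n] (A : Matrix n n ℂ) : Matrix n n ℂ :=
  matFun Real.log A

/-- The operator relative entropy `D_op(X‖Y) = X^{1/2} log(X^{1/2} Y⁻¹ X^{1/2}) X^{1/2}`. -/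
def Dop {n : Type*} [Fintype n] [DecidableEq n] (X Y : Matrix n n ℂ) : Matrix n n ℂ :=
  mpow X (1/2) * mlog (mpow X (1/2) * Y⁻¹ * mpow X (1/2)) * mpow X (1/2)

/-- The Belavkin--Staszewski relative entropy `D̂(ρ‖σ) = Re Tr[D_op(ρ‖σ)]`. -/
def BSEntropy {n : Type*} [Fintype n] [DecidableEq n] (ρ σ : Matrix n n ℂ) : ℝ :=
  (Dop ρ σ).trace.re

/-- The weighted matrix geometric mean `G_t(X,Y) = X^{1/2} (X^{-1/2} Y X^{-1/2})^t X^{1/2}`. -/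
def geoMean {n : Type*} [Fintype n] [DecidableEq n] (t : ℝ) (X Y : Matrix n n ℂ) :
    Matrix n n ℂ :=
  mpow X (1/2) * mpow (mpow X (-(1/2)) * Y * mpow X (-(1/2))) t * mpow X (1/2)

/-- Partial trace over the second (B) factor. -/
def ptraceB {R B : Type*} [Fintype B] (M : Matrix (R × B) (R × B) ℂ) : Matrix R R ℂ :=
  Matrix.of fun r r' => ∑ b, M (r, b) (r', b)

/-- Partial trace over the first (R) factor. -/
def ptraceR {R A : Type*} [Fintype R] (M : Matrix (R × A) (R × A) ℂ) : Matrix A A ℂ :=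
  Matrix.of fun a a' => ∑ r, M (r, a) (r, a')

/-- The map associated to a Choi matrix `J` (indexed by `(A × B) × (A × B)`), applied to a
matrix indexed by `(R × A) × (R × A)`. -/
def choiMap {R A B : Type*} [Fintype A] (J : Matrix (A × B) (A × B) ℂ)
    (X : Matrix (R × A) (R × A) ℂ) : Matrix (R × B) (R × B) ℂ :=
  Matrix.of fun p q => ∑ a, ∑ a', X (p.1, a) (q.1, a') * J (a, p.2) (a', q.2)


attribute [local instance] Matrix.normedAddCommGroup Matrix.normedSpace

section Helpers

variable {n : Type*} [Fintype n] [DecidableEq n] {A : Matrix n n ℂ}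

lemma matFun_eq (f : ℝ → ℝ) (hA : A.IsHermitian) :
    matFun f A = (hA.eigenvectorUnitary : Matrix n n ℂ) *
      Matrix.diagonal (fun i => (f (hA.eigenvalues i) : ℂ)) *
      (hA.eigenvectorUnitary : Matrix n n ℂ)ᴴ := dif_pos hA

lemma unitary_conj_mul (U : Matrix n n ℂ) (hU : U ∈ Matrix.unitaryGroup n ℂ)
    (D E : Matrix n n ℂ) : (U * D * Uᴴ) * (U * E * Uᴴ) = U * (D * E) * Uᴴ := by
  have h1 : Uᴴ * U = 1 := by
    rw [← Matrix.star_eq_conjTranspose]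
    exact Unitary.star_mul_self_of_mem hU
  rw [mul_assoc (U * D), ← mul_assoc Uᴴ, ← mul_assoc Uᴴ, h1, one_mul,
    ← mul_assoc, ← mul_assoc, mul_assoc U D E]

lemma matFun_mul (f g : ℝ → ℝ) (hA : A.IsHermitian) :
    matFun f A * matFun g A = matFun (fun x => f x * g x) A := by
  rw [matFun_eq f hA, matFun_eq g hA, matFun_eq (fun x => f x * g x) hA,
    unitary_conj_mul _ (SetLike.coe_mem _), Matrix.diagonal_mul_diagonal]
  congr 1
  congr 1
  ext i
  push_cast
  ring

lemma matFun_congr {f g : ℝ → ℝ} (hA : A.IsHermitian)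
    (h : ∀ i, f (hA.eigenvalues i) = g (hA.eigenvalues i)) :
    matFun f A = matFun g A := by
  have hfg : (fun i => (f (hA.eigenvalues i) : ℂ)) = fun i => (g (hA.eigenvalues i) : ℂ) := by
    funext i; rw [h i]
  rw [matFun_eq f hA, matFun_eq g hA, hfg]

lemma matFun_one (hA : A.IsHermitian) : matFun (fun _ => 1) A = 1 := by
  rw [matFun_eq (fun _ => 1) hA]
  have : (Matrix.diagonal (fun _ : n => ((1 : ℝ) : ℂ))) = 1 := by
    simp [Matrix.diagonal_one]
  rw [this, mul_one, ← Matrix.star_eq_conjTranspose]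
  exact Unitary.mul_star_self_of_mem (SetLike.coe_mem _)

lemma matFun_id (hA : A.IsHermitian) : matFun id A = A := by
  rw [matFun_eq id hA, ← Matrix.star_eq_conjTranspose]
  exact (hA.spectral_theorem).symm

lemma matFun_isHermitian (f : ℝ → ℝ) (hA : A.IsHermitian) :
    (matFun f A).IsHermitian := by
  rw [matFun_eq f hA]
  have hD : (Matrix.diagonal (fun i => (f (hA.eigenvalues i) : ℂ))).IsHermitian := by
    rw [Matrix.IsHermitian, Matrix.diagonal_conjTranspose]
    have : (star fun i => (f (hA.eigenvalues i) : ℂ)) = fun i => (f (hA.eigenvalues i) : ℂ) := by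
      funext i
      exact Complex.conj_ofReal _
    rw [this]
  rw [Matrix.IsHermitian, Matrix.conjTranspose_mul, Matrix.conjTranspose_mul,
    Matrix.conjTranspose_conjTranspose, hD.eq, mul_assoc]

lemma matFun_eq_cfc (f : ℝ → ℝ) (hA : A.IsHermitian) :
    matFun f A = cfc f A := by
  rw [matFun_eq f hA, hA.cfc_eq, Matrix.IsHermitian.cfc, ← Matrix.star_eq_conjTranspose]
  rfl

lemma mpow_eq (t : ℝ) (hA : A.IsHermitian) :
    mpow A t = matFun (fun x => x ^ t) A := rfl

lemma mlog_eq : mlog A = matFun Real.log A := rfl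

lemma diagonal_eq_sum (d : n → ℂ) :
    Matrix.diagonal d = ∑ k, d k • Matrix.single k k 1 := by
  ext i j
  simp only [Matrix.sum_apply, Matrix.smul_apply, Matrix.single, Matrix.of_apply,
    smul_eq_mul, mul_ite, mul_one, mul_zero]
  by_cases h : i = j
  · subst h
    rw [Matrix.diagonal_apply_eq]
    rw [Finset.sum_eq_single i (fun k _ hk => by simp [hk]) (by simp)]
    simp
  · rw [Matrix.diagonal_apply_ne _ h]
    symm
    apply Finset.sum_eq_zero
    intro k _
    simp only [ite_eq_right_iff, and_imp]
    rintro rfl rfl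
    exact absurd rfl h

lemma conj_diag_expand (P Q U : Matrix n n ℂ) (d : n → ℂ) :
    P * (U * Matrix.diagonal d * Uᴴ) * Q
      = ∑ k, d k • (P * (U * Matrix.single k k 1 * Uᴴ) * Q) := by
  rw [diagonal_eq_sum]
  simp only [Finset.mul_sum, Finset.sum_mul, Matrix.mul_smul, Matrix.smul_mul]

end Helpers

/-- the derivative of `t ↦ G_t(A,B)` at `t = 0` is `−D_op(A‖B)`. -/
theorem hasDerivAt_geoMean_zero {n : ℕ}
    (A B : Matrix (Fin n) (Fin n) ℂ) (hA : A.PosDef) (hB : B.PosDef) :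
    HasDerivAt (fun t : ℝ => geoMean t A B) (-(Dop A B)) 0 := by
  classical
  have hAh := hA.isHermitian
  set S := mpow A (1/2) with hSdef
  set Sm := mpow A (-(1/2)) with hSmdef
  have hSmh : Sm.IsHermitian := matFun_isHermitian _ hAh
  have hpow : ∀ s t : ℝ, mpow A s * mpow A t = mpow A (s + t) := by
    intro s t
    rw [mpow_eq s hAh, mpow_eq t hAh, mpow_eq (s + t) hAh, matFun_mul _ _ hAh]
    exact matFun_congr hAh fun i => (Real.rpow_add (hA.eigenvalues_pos i) s t).symm
  have hmpow_zero : mpow A 0 = 1 := by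
    rw [mpow_eq 0 hAh, matFun_congr hAh (g := fun _ => (1 : ℝ)) fun i => Real.rpow_zero _]
    exact matFun_one hAh
  have hSSm : S * Sm = 1 := by
    rw [hSdef, hSmdef, hpow, show (1/2 + -(1/2) : ℝ) = 0 by ring, hmpow_zero]
  have hSmS : Sm * S = 1 := by
    rw [hSdef, hSmdef, hpow, show (-(1/2) + 1/2 : ℝ) = 0 by ring, hmpow_zero]
  set M := Sm * B * Sm with hMdef
  have hM : M.PosDef := by
    have hconj : (Smᴴ * B * Sm).PosDef := by
      refine Matrix.PosDef.of_dotProduct_mulVec_pos (Matrix.isHermitian_conjTranspose_mul_mul _ hB.isHermitian) fun x hx => ?_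
      have hx' : Sm *ᵥ x ≠ 0 := by
        intro h0
        apply hx
        have hID : S *ᵥ (Sm *ᵥ x) = x := by
          rw [Matrix.mulVec_mulVec, hSSm, Matrix.one_mulVec]
        rw [h0, Matrix.mulVec_zero] at hID
        exact hID.symm
      simpa only [Matrix.star_mulVec, Matrix.dotProduct_mulVec, Matrix.vecMul_vecMul] using
        hB.dotProduct_mulVec_pos hx'
    rwa [hSmh.eq] at hconj
  have hMh := hM.isHermitian
  have hBB : B * B⁻¹ = 1 := Matrix.mul_nonsing_inv B (isUnit_iff_ne_zero.mpr hB.det_pos.ne')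
  have hMK : M * (S * B⁻¹ * S) = 1 := by
    have hassoc : Sm * B * Sm * (S * B⁻¹ * S) = Sm * (B * ((Sm * S) * (B⁻¹ * S))) := by
      simp only [mul_assoc]
    rw [hMdef, hassoc, hSmS, one_mul, ← mul_assoc B, hBB, one_mul, hSmS]
  have hKinv : M⁻¹ = S * B⁻¹ * S := Matrix.inv_eq_right_inv hMK
  have hMinv_cfc : M⁻¹ = cfc (fun x : ℝ => x⁻¹) M := by
    have hcg := matFun_congr hMh (f := fun x => id x * x⁻¹) (g := fun _ => (1 : ℝ))
      (fun i => mul_inv_cancel₀ (hM.eigenvalues_pos i).ne')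
    have h1 : matFun id M * matFun (fun x : ℝ => x⁻¹) M = 1 := by
      rw [matFun_mul _ _ hMh, hcg, matFun_one hMh]
    rw [matFun_id hMh] at h1
    rw [Matrix.inv_eq_right_inv h1]
    exact matFun_eq_cfc _ hMh
  have hsa : IsSelfAdjoint M := by
    rw [isSelfAdjoint_iff, Matrix.star_eq_conjTranspose]
    exact hMh.eq
  have hne : ∀ x ∈ spectrum ℝ M, x ≠ 0 := by
    intro x hx
    rw [hMh.spectrum_real_eq_range_eigenvalues] at hx
    obtain ⟨i, rfl⟩ := hx
    exact (hM.eigenvalues_pos i).ne'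
  have hcomp : cfc (Real.log ∘ fun x : ℝ => x⁻¹) M = cfc Real.log (cfc (fun x : ℝ => x⁻¹) M) :=
    cfc_comp Real.log (fun x : ℝ => x⁻¹) M hsa
      (Real.continuousOn_log.mono (by rintro - ⟨x, hx, rfl⟩; simpa using inv_ne_zero (hne x hx)))
      (continuousOn_inv₀.mono (by intro x hx; simpa using hne x hx))
  have hlogMinv : mlog M⁻¹ = -(mlog M) := by
    calc mlog M⁻¹ = cfc Real.log M⁻¹ := matFun_eq_cfc _ hM.inv.isHermitian
      _ = cfc Real.log (cfc (fun x : ℝ => x⁻¹) M) := by rw [← hMinv_cfc]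
      _ = cfc (Real.log ∘ fun x : ℝ => x⁻¹) M := hcomp.symm
      _ = cfc (fun x => -Real.log x) M := by
            rw [show (Real.log ∘ fun x : ℝ => x⁻¹) = (fun x => -Real.log x) from
              funext fun x => Real.log_inv x]
      _ = -cfc Real.log M := cfc_neg _ _
      _ = -(mlog M) := by rw [← matFun_eq_cfc Real.log hMh]; rfl
  set U : Matrix (Fin n) (Fin n) ℂ := (hMh.eigenvectorUnitary : Matrix (Fin n) (Fin n) ℂ)
    with hU
  set ν : Fin n → ℝ := hMh.eigenvalues with hν
  have hfun : ∀ t : ℝ, geoMean t A B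
      = ∑ k, ((ν k ^ t : ℝ) : ℂ) • (S * (U * Matrix.single k k 1 * Uᴴ) * S) := by
    intro t
    have hg : geoMean t A B = S * mpow M t * S := rfl
    rw [hg, mpow_eq t hMh, matFun_eq _ hMh, conj_diag_expand]
  have hder : HasDerivAt
      (fun t : ℝ => ∑ k, ((ν k ^ t : ℝ) : ℂ) • (S * (U * Matrix.single k k 1 * Uᴴ) * S))
      (∑ k, ((Real.log (ν k) : ℝ) : ℂ) • (S * (U * Matrix.single k k 1 * Uᴴ) * S))
      0 := by
    apply HasDerivAt.fun_sum
    intro k _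
    have h1 : HasDerivAt (fun t : ℝ => (ν k) ^ t) ((ν k) ^ (0 : ℝ) * Real.log (ν k)) 0 :=
      (Real.hasStrictDerivAt_const_rpow (hM.eigenvalues_pos k) 0).hasDerivAt
    have h2 := (h1.ofReal_comp).smul_const
      (S * (U * Matrix.single k k 1 * Uᴴ) * S)
    simpa [Real.rpow_zero] using h2
  have hval : ∑ k, ((Real.log (ν k) : ℝ) : ℂ) • (S * (U * Matrix.single k k 1 * Uᴴ) * S)
      = -(Dop A B) := by
    rw [← conj_diag_expand]
    have hml : U * Matrix.diagonal (fun i => (Real.log (ν i) : ℂ)) * Uᴴ = mlog M :=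
      (matFun_eq Real.log hMh).symm
    rw [hml]
    have hDop : Dop A B = S * mlog M⁻¹ * S := by
      rw [hKinv]; rfl
    rw [hDop, hlogMinv, mul_neg, neg_mul, neg_neg]
  rw [funext hfun, ← hval]
  exact hder
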